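/- arXiv:math/0601575 — 2 statements merged into one kernel-verified Lean document; each statement's English description precedes it below -/
import Mathlib

section
/- Let P be a bounded above cochain complex of F-projective objects and X any cochain complex. Then the localization functor induces an isomorphism Hom_{K(A)}(P, X) ≅ Hom_{D_F(A)}(P, X), where D_F(A) is the localization of K(A) at the F-split acyclic complexes. -/
open CategoryTheory Limits

variable {A B : Type*} [Category A] [Category B] [Abelian A] [Abelian B]

/-- An object of `A` is `F`-projective if it is a direct summand of `L Y` for some `Y`. -/
def FProjective (L : B ⥤ A) (P : A) : Prop :=
  ∃ (Y : B) (i : P ⟶ L.obj Y) (r : L.obj Y ⟶ P), i ≫ r = 𝟙 P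

/-- The class of morphisms of the homotopy category `K(A)` represented by chain maps
whose mapping cone is `F`-split acyclic (becomes contractible after applying `F`).
`D_F(A)` is the localization of `K(A)` at this class. -/
def FConeSplit (F : A ⥤ B) [F.Additive] :
    MorphismProperty (HomotopyCategory A (ComplexShape.up ℤ)) := fun X Y φ =>
  ∃ (X' Y' : CochainComplex A ℤ) (f : X' ⟶ Y')
    (eX : (HomotopyCategory.quotient A (ComplexShape.up ℤ)).obj X' ≅ X)
    (eY : (HomotopyCategory.quotient A (ComplexShape.up ℤ)).obj Y' ≅ Y),
    eX.hom ≫ φ = (HomotopyCategory.quotient A (ComplexShape.up ℤ)).map f ≫ eY.hom ∧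
    Nonempty (Homotopy
      (𝟙 ((F.mapHomologicalComplex (ComplexShape.up ℤ)).obj (CochainComplex.mappingCone f))) 0)

namespace Stmt16Aux

lemma step (F : A ⥤ B) [F.Additive] (L : B ⥤ A) (adj₁ : L ⊣ F)
    {N : CochainComplex A ℤ}
    (H : Homotopy (𝟙 ((F.mapHomologicalComplex (ComplexShape.up ℤ)).obj N)) 0)
    {M : A} (hM : FProjective L M) (n : ℤ) (u : M ⟶ N.X (n + 1))
    (hu : u ≫ N.d (n + 1) (n + 1 + 1) = 0) :
    ∃ v : M ⟶ N.X n, v ≫ N.d n (n + 1) = u := by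
  obtain ⟨Y, ι, ρ, hιρ⟩ := hM
  have rel1 : (ComplexShape.up ℤ).Rel n (n + 1) := rfl
  have rel2 : (ComplexShape.up ℤ).Rel (n + 1) (n + 1 + 1) := rfl
  have hcomm := H.comm (n + 1)
  rw [dNext_eq _ rel2, prevD_eq _ rel1] at hcomm
  simp only [HomologicalComplex.id_f, Functor.mapHomologicalComplex_obj_d,
    HomologicalComplex.zero_f_apply, add_zero] at hcomm
  set w : Y ⟶ F.obj (N.X (n + 1)) := adj₁.homEquiv _ _ (ρ ≫ u) with hw
  have hw0 : w ≫ F.map (N.d (n + 1) (n + 1 + 1)) = 0 := by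
    have h1 : (adj₁.homEquiv Y (N.X (n + 1 + 1))).symm
        (w ≫ F.map (N.d (n + 1) (n + 1 + 1))) = 0 := by
      rw [Adjunction.homEquiv_naturality_right_symm, hw, Equiv.symm_apply_apply,
        Category.assoc, hu, comp_zero]
    have h2 := congrArg (adj₁.homEquiv Y (N.X (n + 1 + 1))) h1
    rw [Equiv.apply_symm_apply] at h2
    rw [h2, Adjunction.homEquiv_unit, Functor.map_zero, comp_zero]
  have key : ((w ≫ H.hom (n + 1) n : Y ⟶ F.obj (N.X n))) ≫ F.map (N.d n (n + 1)) = w := by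
    have gen : ∀ {a b c : B} (w : Y ⟶ a) (d2 : a ⟶ c) (h2 : c ⟶ a) (h1 : a ⟶ b) (d1 : b ⟶ a),
        𝟙 a = d2 ≫ h2 + h1 ≫ d1 → w ≫ d2 = 0 → (w ≫ h1) ≫ d1 = w := by
      intro a b c w d2 h2 h1 d1 hcomm hw0
      have e1 := congrArg (fun t => w ≫ t) hcomm
      simp only [Preadditive.comp_add, ← Category.assoc, hw0, zero_comp,
        zero_add] at e1
      exact e1.symm.trans (Category.comp_id w)
    exact gen w _ _ _ _ hcomm hw0
  refine ⟨ι ≫ (adj₁.homEquiv Y (N.X n)).symm (w ≫ H.hom (n + 1) n), ?_⟩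
  have h3 : (adj₁.homEquiv Y (N.X n)).symm (w ≫ H.hom (n + 1) n) ≫ N.d n (n + 1) = ρ ≫ u := by
    rw [← Adjunction.homEquiv_naturality_right_symm, key, hw, Equiv.symm_apply_apply]
  rw [Category.assoc, h3, ← Category.assoc, hιρ, Category.id_comp]


open Classical in
noncomputable def hAux (N P : CochainComplex A ℤ) (f : P ⟶ N) (b : ℤ) (n : ℤ) :
    P.X (n + 1) ⟶ N.X n :=
  if n ≤ b then
    (if hex : ∃ v : P.X (n + 1) ⟶ N.X n, v ≫ N.d n (n + 1) =
        f.f (n + 1) - P.d (n + 1) (n + 1 + 1) ≫ hAux N P f b (n + 1) then hex.choose else 0)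
  else 0
termination_by (b + 1 - n).toNat
decreasing_by omega

lemma hAux_spec (F : A ⥤ B) [F.Additive] (L : B ⥤ A) (adj₁ : L ⊣ F)
    (N P : CochainComplex A ℤ) (f : P ⟶ N) (b : ℤ)
    (hb : ∀ i, b < i → IsZero (P.X i)) (hproj : ∀ i : ℤ, FProjective L (P.X i))
    (H : Homotopy (𝟙 ((F.mapHomologicalComplex (ComplexShape.up ℤ)).obj N)) 0)
    (n : ℤ) :
    hAux N P f b n ≫ N.d n (n + 1) =
      f.f (n + 1) - P.d (n + 1) (n + 1 + 1) ≫ hAux N P f b (n + 1) := by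
  by_cases hn : n ≤ b
  · have ih := hAux_spec F L adj₁ N P f b hb hproj H (n + 1)
    have hex : ∃ v : P.X (n + 1) ⟶ N.X n, v ≫ N.d n (n + 1) =
        f.f (n + 1) - P.d (n + 1) (n + 1 + 1) ≫ hAux N P f b (n + 1) := by
      refine step F L adj₁ H (hproj (n + 1)) n _ ?_
      rw [Preadditive.sub_comp, Category.assoc, ih, Preadditive.comp_sub,
        f.comm (n + 1) (n + 1 + 1)]
      simp
    conv_lhs => rw [hAux, if_pos hn, dif_pos hex]
    exact hex.choose_spec
  · have h1 : f.f (n + 1) = 0 := (hb (n + 1) (by omega)).eq_of_src _ _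
    have h2 : P.d (n + 1) (n + 1 + 1) = 0 := (hb (n + 1) (by omega)).eq_of_src _ _
    conv_lhs => rw [hAux, if_neg hn]
    rw [h1, h2, zero_comp, zero_comp, sub_zero]
termination_by (b + 1 - n).toNat
decreasing_by omega

lemma homotopyToZero (F : A ⥤ B) [F.Additive] (L : B ⥤ A) (adj₁ : L ⊣ F)
    {P N : CochainComplex A ℤ} (b : ℤ)
    (hb : ∀ i, b < i → IsZero (P.X i)) (hproj : ∀ i : ℤ, FProjective L (P.X i))
    (H : Homotopy (𝟙 ((F.mapHomologicalComplex (ComplexShape.up ℤ)).obj N)) 0)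
    (f : P ⟶ N) : Nonempty (Homotopy f 0) := by
  refine ⟨{ hom := fun i j => if hij : j + 1 = i then
              eqToHom (congrArg P.X hij.symm) ≫ hAux N P f b j else 0,
            zero := fun i j hij => dif_neg (by simpa using hij),
            comm := ?_ }⟩
  intro i
  obtain ⟨m, rfl⟩ : ∃ m, i = m + 1 := ⟨i - 1, by omega⟩
  rw [dNext_eq _ (show (ComplexShape.up ℤ).Rel (m + 1) (m + 1 + 1) from rfl),
    prevD_eq _ (show (ComplexShape.up ℤ).Rel m (m + 1) from rfl)]
  rw [dif_pos rfl, dif_pos rfl]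
  simp only [eqToHom_refl, Category.id_comp]
  rw [hAux_spec F L adj₁ N P f b hb hproj H m]
  simp only [HomologicalComplex.zero_f_apply, add_zero]
  abel


open Triangulated Pretriangulated ZeroObject in
/-- The triangulated subcategory of `K(A)` of objects sent to zero in `K(B)`. -/
noncomputable def FSub (F : A ⥤ B) [F.Additive] :
    ObjectProperty (HomotopyCategory A (ComplexShape.up ℤ)) :=
  (fun Z => IsZero ((F.mapHomotopyCategory (ComplexShape.up ℤ)).obj Z))

open Triangulated Pretriangulated ZeroObject in
instance FSub_isTriangulated (F : A ⥤ B) [F.Additive] : (FSub F).IsTriangulated where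
  exists_zero := ⟨0, isZero_zero _, by
      show IsZero ((F.mapHomotopyCategory (ComplexShape.up ℤ)).obj 0)
      apply Pretriangulated.Triangle.isZero₃_of_isIso₁ _
        ((F.mapHomotopyCategory (ComplexShape.up ℤ)).map_distinguished _
          (Pretriangulated.contractible_distinguished
            (0 : HomotopyCategory A (ComplexShape.up ℤ))))
      exact (inferInstance : IsIso ((F.mapHomotopyCategory (ComplexShape.up ℤ)).map
        (𝟙 (0 : HomotopyCategory A (ComplexShape.up ℤ)))))⟩
  isStableUnderShiftBy n := ⟨fun X hX =>
      IsZero.of_iso ((shiftFunctor _ n).map_isZero hX)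
        (((F.mapHomotopyCategory (ComplexShape.up ℤ)).commShiftIso n).app X)⟩
  ext₂' T hT h₁ h₃ := ObjectProperty.le_isoClosure _ _ (Pretriangulated.Triangle.isZero₂_of_isZero₁₃ _
      ((F.mapHomotopyCategory (ComplexShape.up ℤ)).map_distinguished T hT) h₁ h₃)

lemma vanish (F : A ⥤ B) [F.Additive] (L : B ⥤ A) (adj₁ : L ⊣ F)
    {P : CochainComplex A ℤ} (b : ℤ) (hb : ∀ i, b < i → IsZero (P.X i))
    (hproj : ∀ i : ℤ, FProjective L (P.X i))
    (Z : HomotopyCategory A (ComplexShape.up ℤ)) (hZ : FSub F Z)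
    (φ : (HomotopyCategory.quotient A (ComplexShape.up ℤ)).obj P ⟶ Z) : φ = 0 := by
  obtain ⟨N⟩ := Z
  obtain ⟨f, rfl⟩ := (HomotopyCategory.quotient A (ComplexShape.up ℤ)).map_surjective φ
  have hN : Nonempty (Homotopy (𝟙 ((F.mapHomologicalComplex (ComplexShape.up ℤ)).obj N)) 0) := by
    rw [← HomotopyCategory.isZero_quotient_obj_iff]
    exact IsZero.of_iso hZ (((F.mapHomotopyCategoryFactors (ComplexShape.up ℤ)).app N).symm)
  obtain ⟨H⟩ := hN
  obtain ⟨Ht⟩ := homotopyToZero F L adj₁ b hb hproj H f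
  rw [HomotopyCategory.eq_of_homotopy _ _ Ht, Functor.map_zero]
  rfl

open Pretriangulated in
lemma key (F : A ⥤ B) [F.Additive] (L : B ⥤ A) (adj₁ : L ⊣ F)
    {P : CochainComplex A ℤ} (b : ℤ) (hb : ∀ i, b < i → IsZero (P.X i))
    (hproj : ∀ i : ℤ, FProjective L (P.X i))
    {U V : HomotopyCategory A (ComplexShape.up ℤ)} (s : U ⟶ V) (hs : (FSub F).trW s) :
    Function.Bijective
      (fun g : (HomotopyCategory.quotient A (ComplexShape.up ℤ)).obj P ⟶ U => g ≫ s) := by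
  obtain ⟨Z, g', h', hT, hZ⟩ := hs
  constructor
  · intro a₁ a₂ ha
    have ha' : a₁ ≫ s = a₂ ≫ s := ha
    have h0 : (a₁ - a₂) ≫ s = 0 := by rw [Preadditive.sub_comp, ha', sub_self]
    obtain ⟨q, hq⟩ := Pretriangulated.Triangle.coyoneda_exact₂ _
      (Pretriangulated.inv_rot_of_distTriang _ hT) (a₁ - a₂) (by exact h0)
    rw [vanish F L adj₁ b hb hproj _ ((FSub F).le_shift (-1) Z hZ) q] at hq
    exact sub_eq_zero.mp (hq.trans zero_comp)
  · intro a
    obtain ⟨g, hg⟩ := Pretriangulated.Triangle.coyoneda_exact₂ _ hT a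
      (vanish F L adj₁ b hb hproj Z hZ (a ≫ g'))
    exact ⟨g, hg.symm⟩

open Pretriangulated in
lemma fConeSplit_eq (F : A ⥤ B) [F.Additive] : FConeSplit F = (FSub F).trW := by
  ext X Y φ
  constructor
  · rintro ⟨X', Y', f, eX, eY, hcomm, ⟨H⟩⟩
    have h1 : (FSub F).trW ((HomotopyCategory.quotient A (ComplexShape.up ℤ)).map f) := by
      refine ObjectProperty.trW.mk _
        (HomotopyCategory.mappingCone_triangleh_distinguished f) ?_
      exact IsZero.of_iso ((HomotopyCategory.isZero_quotient_obj_iff _).2 ⟨H⟩)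
        ((F.mapHomotopyCategoryFactors (ComplexShape.up ℤ)).app (CochainComplex.mappingCone f))
    exact ((FSub F).trW.arrow_mk_iso_iff (Arrow.isoMk eX eY hcomm)).1 h1
  · rintro ⟨Z, g', h', hT, hZ⟩
    obtain ⟨X'⟩ := X
    obtain ⟨Y'⟩ := Y
    obtain ⟨f, rfl⟩ := (HomotopyCategory.quotient A (ComplexShape.up ℤ)).map_surjective φ
    refine ⟨X', Y', f, Iso.refl _, Iso.refl _, by exact (Category.id_comp _).trans (Category.comp_id _).symm, ?_⟩
    obtain ⟨e, -⟩ := Pretriangulated.exists_iso_of_arrow_iso _ _ hT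
      (HomotopyCategory.mappingCone_triangleh_distinguished f) (Iso.refl _)
    rw [← HomotopyCategory.isZero_quotient_obj_iff]
    refine IsZero.of_iso (IsZero.of_iso hZ
      (((F.mapHomotopyCategory (ComplexShape.up ℤ)).mapIso
        (Pretriangulated.Triangle.π₃.mapIso e)).symm))
      (((F.mapHomotopyCategoryFactors (ComplexShape.up ℤ)).app _).symm)

end Stmt16Aux

open Stmt16Aux in
/-- For `P` a bounded above complex of `F`-projective objects and `X` any complex, the
localization functor `K(A) ⟶ D_F(A)` induces a bijection
`Hom_{K(A)}(P, X) ≅ Hom_{D_F(A)}(P, X)`. -/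
theorem stmt_16 (F : A ⥤ B) [F.Additive] [F.Faithful]
    [PreservesFiniteLimits F] [PreservesFiniteColimits F]
    (L R : B ⥤ A) (adj₁ : L ⊣ F) (adj₂ : F ⊣ R)
    (P X : CochainComplex A ℤ)
    (hbdd : ∃ b : ℤ, ∀ i : ℤ, b < i → IsZero (P.X i))
    (hproj : ∀ i : ℤ, FProjective L (P.X i)) :
    Function.Bijective (fun g :
        ((HomotopyCategory.quotient A (ComplexShape.up ℤ)).obj P ⟶
          (HomotopyCategory.quotient A (ComplexShape.up ℤ)).obj X) =>
      (FConeSplit F).Q.map g) := by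
  obtain ⟨b, hb⟩ := hbdd
  rw [fConeSplit_eq F]
  constructor
  · intro g₁ g₂ hg
    have hg' : (FSub F).trW.Q.map g₁ = (FSub F).trW.Q.map g₂ := hg
    obtain ⟨Z, s, hs, fac⟩ :=
      (MorphismProperty.map_eq_iff_postcomp (FSub F).trW.Q (FSub F).trW g₁ g₂).1 hg'
    exact (key F L adj₁ b hb hproj s hs).1 fac
  · intro ψ
    obtain ⟨φ, hφ⟩ := Localization.exists_leftFraction (FSub F).trW.Q (FSub F).trW ψ
    obtain ⟨Y', fr, s, hs, rfl⟩ := φ.cases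
    obtain ⟨g, hg⟩ := (key F L adj₁ b hb hproj s hs).2 fr
    have hg' : g ≫ s = fr := hg
    refine ⟨g, ?_⟩
    haveI : IsIso ((FSub F).trW.Q.map s) := Localization.inverts (FSub F).trW.Q (FSub F).trW s hs
    rw [hφ, ← cancel_mono ((FSub F).trW.Q.map s),
      MorphismProperty.LeftFraction.map_comp_map_s, ← Functor.map_comp, hg']
end

section
/- Every bounded above cochain complex X over A admits an F-projective resolution: a bounded above complex P of F-projective objects together with a chain map p : P → X whose cone is F-split acyclic (zero in D_F(A)). -/
open CategoryTheory Limits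

open ZeroObject

set_option linter.unusedSectionVars false
set_option maxHeartbeats 1000000

variable {A B : Type*} [Category A] [Category B] [Abelian A] [Abelian B]

namespace Stmt17

variable (F : A ⥤ B) [F.Additive] [PreservesFiniteLimits F]
variable (L : B ⥤ A) (adj : L ⊣ F)
variable (X : CochainComplex A ℤ)

/-- Data at level `n` of the resolution-in-progress: an object `P = Pⁿ`, the
differential `d : Pⁿ ⟶ Pⁿ⁺¹` (where `N = Pⁿ⁺¹`), the augmentation `p : Pⁿ ⟶ Xⁿ`,
and the `F`-level splitting data `σ, τ`. -/
structure Pack (n : ℤ) (N : A) where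
  P : A
  d : P ⟶ N
  p : P ⟶ X.X n
  σ : F.obj (X.X n) ⟶ F.obj P
  τ : F.obj N ⟶ F.obj P
  proj : FProjective L P

variable {F L X}

/-- The inductive invariants, for a consecutive pair of levels. -/
structure Inv {n : ℤ} {N : A} (T' : Pack F L X (n+1) N) (T : Pack F L X n T'.P) : Prop where
  h1 : T.d ≫ T'.d = 0
  h2 : T.d ≫ T'.p = T.p ≫ X.d n (n+1)
  h3 : T.σ ≫ F.map T.p = 𝟙 _
  h4 : T.σ ≫ F.map T.d = F.map (X.d n (n+1)) ≫ T'.σ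
  h5 : T.τ ≫ F.map T.p = 0
  h6 : T.τ ≫ F.map T.d + F.map T'.d ≫ T'.τ = F.map T'.p ≫ T'.σ - 𝟙 (F.obj T'.P)

/-- jointly-mono property of the `F`-image of a binary biproduct. -/
lemma Fbiprod_ext {Y Z : A} {W : B} {f g : W ⟶ F.obj (Y ⊞ Z)}
    (hfst : f ≫ F.map biprod.fst = g ≫ F.map biprod.fst)
    (hsnd : f ≫ F.map biprod.snd = g ≫ F.map biprod.snd) : f = g := by
  have ht : (biprod.fst ≫ biprod.inl + biprod.snd ≫ biprod.inr : Y ⊞ Z ⟶ Y ⊞ Z) = 𝟙 _ :=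
    biprod.total
  calc f = f ≫ F.map (biprod.fst ≫ biprod.inl + biprod.snd ≫ biprod.inr) := by
            rw [ht, F.map_id, Category.comp_id]
    _ = f ≫ F.map biprod.fst ≫ F.map biprod.inl + f ≫ F.map biprod.snd ≫ F.map biprod.inr := by
            rw [F.map_add]; simp [F.map_comp]
    _ = g ≫ F.map biprod.fst ≫ F.map biprod.inl + g ≫ F.map biprod.snd ≫ F.map biprod.inr := by
            rw [reassoc_of% hfst, reassoc_of% hsnd]
    _ = g := by
            simp only [Category.assoc, ← F.map_comp, ← Preadditive.comp_add]
            rw [← F.map_add, ht, F.map_id, Category.comp_id]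

variable (adj : L ⊣ F)
variable (n : ℤ) {N : A} (T2 : Pack F L X (n+1+1) N) (T1 : Pack F L X (n+1) T2.P)

/-- The differential of the mapping cone, `Cⁿ = Pⁿ⁺¹ ⊞ Xⁿ ⟶ Cⁿ⁺¹ = Pⁿ⁺² ⊞ Xⁿ⁺¹`. -/
noncomputable def dC : (T1.P ⊞ X.X n : A) ⟶ (T2.P ⊞ X.X (n+1) : A) :=
  biprod.desc (biprod.lift (-T1.d) T1.p) (biprod.lift 0 (X.d n (n+1)))

/-- The kernel of the cone differential. -/
noncomputable abbrev KK := kernel (dC n T2 T1)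

/-- The new term of the resolution. -/
noncomputable abbrev Pnew : A := L.obj (F.obj (KK n T2 T1))

noncomputable abbrev εK : Pnew n T2 T1 ⟶ KK n T2 T1 := adj.counit.app _

noncomputable abbrev ιK : KK n T2 T1 ⟶ T1.P ⊞ X.X n := kernel.ι _

/-- Factoring a map through `F (L (F K))` using the kernel comparison and the unit. -/
noncomputable def lft {W : B} (w : W ⟶ F.obj (T1.P ⊞ X.X n))
    (hw : w ≫ F.map (dC n T2 T1) = 0) : W ⟶ F.obj (Pnew n T2 T1) :=
  kernel.lift (F.map (dC n T2 T1)) w hw ≫ inv (kernelComparison (dC n T2 T1) F) ≫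
    adj.unit.app (F.obj (KK n T2 T1))

lemma lft_fac {W : B} (w : W ⟶ F.obj (T1.P ⊞ X.X n))
    (hw : w ≫ F.map (dC n T2 T1) = 0) :
    lft adj n T2 T1 w hw ≫ F.map (εK adj n T2 T1 ≫ ιK n T2 T1) = w := by
  have h1 : adj.unit.app (F.obj (KK n T2 T1)) ≫ F.map (εK adj n T2 T1) = 𝟙 _ :=
    adj.right_triangle_components _
  have h2 : inv (kernelComparison (dC n T2 T1) F) ≫ F.map (ιK n T2 T1) =
      kernel.ι (F.map (dC n T2 T1)) := by
    rw [IsIso.inv_comp_eq, kernelComparison_comp_ι]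
  rw [F.map_comp, lft]
  simp only [Category.assoc]
  rw [reassoc_of% h1]
  rw [h2, kernel.lift_ι]

lemma hb_inl : F.map (biprod.inl : T1.P ⟶ _) ≫ F.map (dC n T2 T1) =
    F.map (biprod.lift (-T1.d) T1.p) := by rw [← F.map_comp, dC, biprod.inl_desc]

lemma hb_inr : F.map (biprod.inr : X.X n ⟶ _) ≫ F.map (dC n T2 T1) =
    F.map (biprod.lift 0 (X.d n (n+1))) := by rw [← F.map_comp, dC, biprod.inr_desc]

/-- the canonical section of `F pⁿ` (before factoring). -/
noncomputable def ξc : F.obj (X.X n) ⟶ F.obj (T1.P ⊞ X.X n) :=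
  F.map biprod.inr - F.map (X.d n (n+1)) ≫ T1.σ ≫ F.map biprod.inl

lemma hξ (hI : Inv T2 T1) : ξc n T2 T1 ≫ F.map (dC n T2 T1) = 0 := by
  apply Fbiprod_ext
  · simp only [ξc, Preadditive.sub_comp, Category.assoc, hb_inl, hb_inr, Limits.zero_comp]
    rw [← F.map_comp, ← F.map_comp, biprod.lift_fst, biprod.lift_fst]
    simp only [Functor.map_zero, Functor.map_neg, Preadditive.comp_neg, zero_sub, neg_eq_zero,
      Limits.comp_zero, Category.assoc, neg_neg]
    rw [hI.h4, ← F.map_comp_assoc, X.d_comp_d, F.map_zero, Limits.zero_comp]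
  · simp only [ξc, Preadditive.sub_comp, Category.assoc, hb_inl, hb_inr, Limits.zero_comp]
    rw [← F.map_comp, ← F.map_comp, biprod.lift_snd, biprod.lift_snd]
    rw [hI.h3]
    simp

/-- the homotopy ingredient (before factoring). -/
noncomputable def θc : F.obj T1.P ⟶ F.obj T1.P :=
  F.map T1.p ≫ T1.σ - 𝟙 _ - F.map T1.d ≫ T1.τ

lemma hζ (hI : Inv T2 T1) : (-(θc n T2 T1 ≫ F.map biprod.inl) :
    F.obj T1.P ⟶ F.obj (T1.P ⊞ X.X n)) ≫ F.map (dC n T2 T1) = 0 := by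
  have hθd : θc n T2 T1 ≫ F.map T1.d = 0 := by
    simp only [θc, Preadditive.sub_comp, Category.assoc, Category.id_comp]
    rw [hI.h4]
    have hτd : T1.τ ≫ F.map T1.d = F.map T2.p ≫ T2.σ - 𝟙 (F.obj T2.P) - F.map T2.d ≫ T2.τ := by
      rw [← hI.h6]; abel
    rw [hτd]
    have h2 : F.map T1.p ≫ F.map (X.d (n+1) (n+1+1)) = F.map T1.d ≫ F.map T2.p := by
      rw [← F.map_comp, ← F.map_comp, hI.h2]
    rw [reassoc_of% h2]
    simp only [Preadditive.comp_sub, Category.assoc, Category.comp_id]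
    have h1' : F.map T1.d ≫ F.map T2.d ≫ T2.τ = 0 := by
      rw [← F.map_comp_assoc, hI.h1, Functor.map_zero, Limits.zero_comp]
    rw [h1']
    abel
  have hθp : θc n T2 T1 ≫ F.map T1.p = 0 := by
    simp only [θc, Preadditive.sub_comp, Category.assoc, Category.id_comp]
    rw [hI.h3, hI.h5]
    simp
  apply Fbiprod_ext
  · simp only [Preadditive.neg_comp, Category.assoc, hb_inl, Limits.zero_comp]
    rw [← F.map_comp, biprod.lift_fst, F.map_neg, Preadditive.comp_neg, neg_neg, hθd]
  · simp only [Preadditive.neg_comp, Category.assoc, hb_inl, Limits.zero_comp]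
    rw [← F.map_comp, biprod.lift_snd, hθp]
    simp

/-- The construction step: level-`n` data built from levels `n+1`, `n+2`. -/
noncomputable def step (hI : Inv T2 T1) : Pack F L X n T1.P where
  P := Pnew n T2 T1
  d := -(εK adj n T2 T1 ≫ ιK n T2 T1 ≫ biprod.fst)
  p := εK adj n T2 T1 ≫ ιK n T2 T1 ≫ biprod.snd
  σ := lft adj n T2 T1 (ξc n T2 T1) (hξ n T2 T1 hI)
  τ := lft adj n T2 T1 (-(θc n T2 T1 ≫ F.map biprod.inl)) (hζ n T2 T1 hI)
  proj := ⟨F.obj (KK n T2 T1), 𝟙 _, 𝟙 _, by simp⟩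

section StepInv

variable (adj : L ⊣ F)
variable (n : ℤ) {N : A} (T2 : Pack F L X (n+1+1) N) (T1 : Pack F L X (n+1) T2.P)

lemma lft_fac' {W : B} (w : W ⟶ F.obj (T1.P ⊞ X.X n))
    (hw : w ≫ F.map (dC n T2 T1) = 0) {Z : A} (x : (T1.P ⊞ X.X n : A) ⟶ Z) :
    lft adj n T2 T1 w hw ≫ F.map (εK adj n T2 T1 ≫ ιK n T2 T1 ≫ x) = w ≫ F.map x := by
  rw [show εK adj n T2 T1 ≫ ιK n T2 T1 ≫ x = (εK adj n T2 T1 ≫ ιK n T2 T1) ≫ x by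
    rw [Category.assoc], F.map_comp, ← Category.assoc, lft_fac]

lemma ker_fst : ιK n T2 T1 ≫ biprod.fst ≫ T1.d = 0 := by
  have key := kernel.condition (dC n T2 T1)
  have : (ιK n T2 T1 ≫ dC n T2 T1) ≫ biprod.fst = 0 := by rw [key]; simp
  have hf : dC n T2 T1 ≫ biprod.fst = -(biprod.fst ≫ T1.d) := by ext <;> simp [dC]
  rw [Category.assoc, hf, Preadditive.comp_neg, neg_eq_zero] at this
  exact this

lemma ker_snd : ιK n T2 T1 ≫ biprod.fst ≫ T1.p + ιK n T2 T1 ≫ biprod.snd ≫ X.d n (n+1) = 0 := by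
  have key := kernel.condition (dC n T2 T1)
  have : (ιK n T2 T1 ≫ dC n T2 T1) ≫ biprod.snd = 0 := by rw [key]; simp
  have hs : dC n T2 T1 ≫ biprod.snd = biprod.fst ≫ T1.p + biprod.snd ≫ X.d n (n+1) := by
    ext <;> simp [dC]
  rw [Category.assoc, hs, Preadditive.comp_add] at this
  exact this

lemma step_inv (hI : Inv T2 T1) : Inv T1 (step adj n T2 T1 hI) := by
  constructor
  · -- h1
    show (-(εK adj n T2 T1 ≫ ιK n T2 T1 ≫ biprod.fst)) ≫ T1.d = 0
    simp only [Preadditive.neg_comp, Category.assoc, neg_eq_zero]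
    rw [ker_fst n T2 T1, Limits.comp_zero]
  · -- h2
    show (-(εK adj n T2 T1 ≫ ιK n T2 T1 ≫ biprod.fst)) ≫ T1.p =
      (εK adj n T2 T1 ≫ ιK n T2 T1 ≫ biprod.snd) ≫ X.d n (n+1)
    have h : ιK n T2 T1 ≫ biprod.fst ≫ T1.p = -(ιK n T2 T1 ≫ biprod.snd ≫ X.d n (n+1)) :=
      eq_neg_of_add_eq_zero_left (ker_snd n T2 T1)
    simp only [Preadditive.neg_comp, Category.assoc, h, Preadditive.comp_neg, neg_neg]
  · -- h3
    show lft adj n T2 T1 (ξc n T2 T1) _ ≫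
      F.map (εK adj n T2 T1 ≫ ιK n T2 T1 ≫ biprod.snd) = 𝟙 _
    rw [lft_fac']
    simp only [ξc, Preadditive.sub_comp, Category.assoc, ← F.map_comp]
    simp
  · -- h4
    show lft adj n T2 T1 (ξc n T2 T1) _ ≫
        F.map (-(εK adj n T2 T1 ≫ ιK n T2 T1 ≫ biprod.fst)) = F.map (X.d n (n+1)) ≫ T1.σ
    rw [Functor.map_neg, Preadditive.comp_neg, lft_fac']
    simp only [ξc, Preadditive.sub_comp, Category.assoc, ← F.map_comp]
    simp
  · -- h5
    show lft adj n T2 T1 (-(θc n T2 T1 ≫ F.map biprod.inl)) _ ≫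
      F.map (εK adj n T2 T1 ≫ ιK n T2 T1 ≫ biprod.snd) = 0
    rw [lft_fac']
    simp only [Preadditive.neg_comp, Category.assoc, ← F.map_comp]
    simp
  · -- h6
    show lft adj n T2 T1 (-(θc n T2 T1 ≫ F.map biprod.inl)) _ ≫
        F.map (-(εK adj n T2 T1 ≫ ιK n T2 T1 ≫ biprod.fst)) + F.map T1.d ≫ T1.τ =
      F.map T1.p ≫ T1.σ - 𝟙 (F.obj T1.P)
    rw [Functor.map_neg, Preadditive.comp_neg, lft_fac']
    simp only [Preadditive.neg_comp, Category.assoc, ← F.map_comp, neg_neg]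
    rw [show (biprod.inl : T1.P ⟶ T1.P ⊞ X.X n) ≫ biprod.fst = 𝟙 _ from biprod.inl_fst]
    rw [CategoryTheory.Functor.map_id, Category.comp_id, θc]
    abel

end StepInv

section Tower

variable (F L X) in
/-- The trivial (zero) level data. -/
noncomputable def trivPack (n : ℤ) (N : A) : Pack F L X n N where
  P := 0
  d := 0
  p := 0
  σ := 0
  τ := 0
  proj := ⟨0, 0, 0, (isZero_zero A).eq_of_src _ _⟩

lemma triv_inv (n : ℤ) (N₀ : A) (hzn : IsZero (X.X n)) :
    Inv (trivPack F L X (n+1) N₀) (trivPack F L X n _) := by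
  constructor
  · simp [trivPack]; rfl
  · simp [trivPack]
  · exact ((F.map_isZero hzn).eq_of_src _ _)
  · simp [trivPack]
  · simp [trivPack]; rfl
  · apply (F.map_isZero (isZero_zero A)).eq_of_src

variable (F L X) in
/-- A bundle of two consecutive levels of the construction together with the invariants. -/
structure Bund (n : ℤ) where
  N : A
  T' : Pack F L X (n+1) N
  T : Pack F L X n T'.P
  inv : Inv T' T

variable (adj : L ⊣ F)

/-- One step of the downward construction. -/
noncomputable def nextBund (n : ℤ) (prev : Bund F L X (n+1)) : Bund F L X n where
  N := prev.T'.P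
  T' := prev.T
  T := step adj n prev.T' prev.T prev.inv
  inv := step_inv adj n prev.T' prev.T prev.inv

/-- The trivial bundle, used above the bound. -/
noncomputable def trivBund (n : ℤ) (hzn : IsZero (X.X n)) : Bund F L X n where
  N := 0
  T' := trivPack F L X (n+1) 0
  T := trivPack F L X n _
  inv := triv_inv n 0 hzn

variable (b : ℤ) (hb : ∀ i, b < i → IsZero (X.X i))

/-- The full tower of the construction, by downward well-founded recursion. -/
noncomputable def D : ∀ n : ℤ, Bund F L X n
  | n =>
    if h : b < n then trivBund n (hb n h)
    else nextBund adj n (D (n+1))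
  termination_by n => (b + 1 - n).toNat
  decreasing_by
    rename_i h
    simp only [not_lt] at h
    omega

lemma D_top (n : ℤ) (h : b < n) : D adj b hb n = trivBund n (hb n h) := by
  rw [D]
  exact dif_pos h

lemma D_succ (n : ℤ) (h : ¬ b < n) : D adj b hb n = nextBund adj n (D adj b hb (n+1)) := by
  rw [D]
  exact dif_neg h

lemma D_coh (n : ℤ) :
    (⟨(D adj b hb n).N, (D adj b hb n).T'⟩ : Σ N : A, Pack F L X (n+1) N) =
      ⟨(D adj b hb (n+1)).T'.P, (D adj b hb (n+1)).T⟩ := by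
  by_cases h : b < n
  · rw [D_top adj b hb n h, D_top adj b hb (n+1) (by omega)]
    unfold trivBund trivPack
    rfl
  · rw [D_succ adj b hb n h]
    rfl

end Tower

section Glue

lemma sigma_subst {n : ℤ} {NA : A} {T' : Pack F L X (n+1) NA}
    {NB : A} {S' : Pack F L X (n+1+1) NB} {S : Pack F L X (n+1) S'.P}
    (hc : (⟨NA, T'⟩ : Σ N : A, Pack F L X (n+1) N) = ⟨S'.P, S⟩)
    (motive : ∀ (NC : A) (U : Pack F L X (n+1) NC), Prop)
    (h : motive NA T') : motive S'.P S := by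
  have h1 : NA = S'.P := congrArg (fun s : Σ N : A, Pack F L X (n+1) N => s.1) hc
  subst h1
  obtain rfl : T' = S := eq_of_heq (Sigma.ext_iff.mp hc).2
  exact h

variable {n : ℤ} {NA : A} {T' : Pack F L X (n+1) NA} {T : Pack F L X n T'.P}
    {NB : A} {S' : Pack F L X (n+1+1) NB} {S : Pack F L X (n+1) S'.P}
    (hc : (⟨NA, T'⟩ : Σ N : A, Pack F L X (n+1) N) = ⟨S'.P, S⟩)
    (hI : Inv T' T)

include hc hI

lemma glue1 (e : T'.P = S.P) : T.d ≫ eqToHom e ≫ S.d = 0 := by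
  have h1 : NA = S'.P := congrArg (fun s : Σ N : A, Pack F L X (n+1) N => s.1) hc
  subst h1
  obtain rfl : T' = S := eq_of_heq (Sigma.ext_iff.mp hc).2
  simpa using hI.h1

lemma glue2 (e : T'.P = S.P) : T.d ≫ eqToHom e ≫ S.p = T.p ≫ X.d n (n+1) := by
  have h1 : NA = S'.P := congrArg (fun s : Σ N : A, Pack F L X (n+1) N => s.1) hc
  subst h1
  obtain rfl : T' = S := eq_of_heq (Sigma.ext_iff.mp hc).2
  simpa using hI.h2

lemma glue4 (e : T'.P = S.P) :
    T.σ ≫ F.map (T.d ≫ eqToHom e) = F.map (X.d n (n+1)) ≫ S.σ := by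
  have h1 : NA = S'.P := congrArg (fun s : Σ N : A, Pack F L X (n+1) N => s.1) hc
  subst h1
  obtain rfl : T' = S := eq_of_heq (Sigma.ext_iff.mp hc).2
  simpa using hI.h4

lemma glue6 (e : T'.P = S.P) :
    (F.map (eqToHom e.symm) ≫ T.τ) ≫ F.map (T.d ≫ eqToHom e) + F.map S.d ≫ S.τ =
      F.map S.p ≫ S.σ - 𝟙 (F.obj S.P) := by
  have h1 : NA = S'.P := congrArg (fun s : Σ N : A, Pack F L X (n+1) N => s.1) hc
  subst h1
  obtain rfl : T' = S := eq_of_heq (Sigma.ext_iff.mp hc).2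
  simpa using hI.h6

end Glue

section Assemble

variable (adj : L ⊣ F) (b : ℤ) (hb : ∀ i, b < i → IsZero (X.X i))

/-- The terms of the resolution. -/
noncomputable abbrev PX (n : ℤ) : A := (D adj b hb n).T.P

lemma ecoh (n : ℤ) : (D adj b hb n).T'.P = PX adj b hb (n+1) :=
  congrArg (fun s : Σ N : A, Pack F L X (n+1) N => s.2.P) (D_coh adj b hb n)

/-- The differentials of the resolution. -/
noncomputable def dP (n : ℤ) : PX adj b hb n ⟶ PX adj b hb (n+1) :=
  (D adj b hb n).T.d ≫ eqToHom (ecoh adj b hb n)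

noncomputable def pf (n : ℤ) : PX adj b hb n ⟶ X.X n := (D adj b hb n).T.p

noncomputable def σg (n : ℤ) : F.obj (X.X n) ⟶ F.obj (PX adj b hb n) := (D adj b hb n).T.σ

noncomputable def τg (n : ℤ) : F.obj (PX adj b hb (n+1)) ⟶ F.obj (PX adj b hb n) :=
  F.map (eqToHom (ecoh adj b hb n).symm) ≫ (D adj b hb n).T.τ

lemma G1 (n : ℤ) : dP adj b hb n ≫ dP adj b hb (n+1) = 0 := by
  have h := glue1 (D_coh adj b hb n) (D adj b hb n).inv (ecoh adj b hb n)
  rw [dP, dP]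
  simp only [Category.assoc]
  rw [reassoc_of% h, Limits.zero_comp]

lemma G2 (n : ℤ) : dP adj b hb n ≫ pf adj b hb (n+1) = pf adj b hb n ≫ X.d n (n+1) := by
  have h := glue2 (D_coh adj b hb n) (D adj b hb n).inv (ecoh adj b hb n)
  rw [dP, pf, pf, Category.assoc, h]

lemma G3 (n : ℤ) : σg adj b hb n ≫ F.map (pf adj b hb n) = 𝟙 _ := (D adj b hb n).inv.h3

lemma G4 (n : ℤ) : σg adj b hb n ≫ F.map (dP adj b hb n) =
    F.map (X.d n (n+1)) ≫ σg adj b hb (n+1) :=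
  glue4 (D_coh adj b hb n) (D adj b hb n).inv (ecoh adj b hb n)

lemma G5 (n : ℤ) : τg adj b hb n ≫ F.map (pf adj b hb n) = 0 := by
  rw [τg, Category.assoc, pf, (D adj b hb n).inv.h5, Limits.comp_zero]

lemma G6 (n : ℤ) : τg adj b hb n ≫ F.map (dP adj b hb n) +
    F.map (dP adj b hb (n+1)) ≫ τg adj b hb (n+1) =
    F.map (pf adj b hb (n+1)) ≫ σg adj b hb (n+1) - 𝟙 (F.obj (PX adj b hb (n+1))) := by
  have h := glue6 (D_coh adj b hb n) (D adj b hb n).inv (ecoh adj b hb n)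
  rw [τg, dP, dP, pf, σg, τg]
  convert h using 2
  simp only [← Functor.map_comp_assoc]
  simp only [Category.assoc, eqToHom_trans, eqToHom_refl, Category.comp_id]

/-- The resolution complex. -/
noncomputable def Pc : CochainComplex A ℤ := CochainComplex.of (PX adj b hb) (dP adj b hb) (G1 adj b hb)

/-- The augmentation chain map. -/
noncomputable def pmap : Pc adj b hb ⟶ X where
  f := pf adj b hb
  comm' := by
    rintro i j (rfl : i + 1 = j)
    show pf adj b hb i ≫ X.d i (i+1) = (Pc adj b hb).d i (i+1) ≫ pf adj b hb (i+1)
    have hd : (Pc adj b hb).d i (i+1) = dP adj b hb i := CochainComplex.of_d _ _ i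
    rw [hd]
    exact (G2 adj b hb i).symm

lemma PX_top (n : ℤ) (h : b < n) : IsZero (PX adj b hb n) := by
  rw [PX, D_top adj b hb n h]
  exact isZero_zero A

lemma PX_proj (n : ℤ) : FProjective L (PX adj b hb n) := (D adj b hb n).T.proj

end Assemble

section Htpy

open CochainComplex CochainComplex.mappingCone

variable (adj : L ⊣ F) (b : ℤ) (hb : ∀ i, b < i → IsZero (X.X i))

lemma Pc_d (n : ℤ) : (Pc adj b hb).d n (n+1) = dP adj b hb n := CochainComplex.of_d _ _ n

/-- The contracting homotopy components. -/
noncomputable def sh (i j : ℤ) (hij : j + 1 = i) :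
    F.obj ((mappingCone (pmap adj b hb)).X i) ⟶ F.obj ((mappingCone (pmap adj b hb)).X j) :=
  F.map ((fst (pmap adj b hb)).1.v i (i+1) rfl) ≫ τg adj b hb i ≫
    F.map ((inl (pmap adj b hb)).v i j (by omega)) +
  F.map ((snd (pmap adj b hb)).v i i (add_zero i)) ≫ σg adj b hb i ≫
    F.map ((inl (pmap adj b hb)).v i j (by omega))

lemma Fcone_ext {i ii : ℤ} (hii : i + 1 = ii) {Z : B}
    {f g : F.obj ((mappingCone (pmap adj b hb)).X i) ⟶ Z}
    (h1 : F.map ((inl (pmap adj b hb)).v ii i (by omega)) ≫ f =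
      F.map ((inl (pmap adj b hb)).v ii i (by omega)) ≫ g)
    (h2 : F.map ((inr (pmap adj b hb)).f i) ≫ f = F.map ((inr (pmap adj b hb)).f i) ≫ g) :
    f = g := by
  have hid := mappingCone.id_X (pmap adj b hb) i ii hii
  calc f = F.map ((fst (pmap adj b hb)).1.v i ii hii ≫ (inl (pmap adj b hb)).v ii i (by omega) +
        (snd (pmap adj b hb)).v i i (add_zero i) ≫ (inr (pmap adj b hb)).f i) ≫ f := by
        rw [hid, CategoryTheory.Functor.map_id, Category.id_comp]
    _ = F.map ((fst (pmap adj b hb)).1.v i ii hii) ≫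
          (F.map ((inl (pmap adj b hb)).v ii i (by omega)) ≫ f) +
        F.map ((snd (pmap adj b hb)).v i i (add_zero i)) ≫
          (F.map ((inr (pmap adj b hb)).f i) ≫ f) := by
        rw [Functor.map_add, Functor.map_comp, Functor.map_comp]
        simp [Preadditive.add_comp, Category.assoc]
    _ = F.map ((fst (pmap adj b hb)).1.v i ii hii) ≫
          (F.map ((inl (pmap adj b hb)).v ii i (by omega)) ≫ g) +
        F.map ((snd (pmap adj b hb)).v i i (add_zero i)) ≫
          (F.map ((inr (pmap adj b hb)).f i) ≫ g) := by rw [h1, h2]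
    _ = g := by
        rw [← Category.assoc, ← Category.assoc, ← Preadditive.add_comp, ← Functor.map_comp,
          ← Functor.map_comp, ← Functor.map_add, hid, CategoryTheory.Functor.map_id,
          Category.id_comp]

lemma pmap_f (n : ℤ) : (pmap adj b hb).f n = pf adj b hb n := rfl

lemma inr_sh (m j : ℤ) (h : j + 1 = m) :
    F.map ((inr (pmap adj b hb)).f m) ≫ sh adj b hb m j h =
      σg adj b hb m ≫ F.map ((inl (pmap adj b hb)).v m j (by omega)) := by
  rw [sh, Preadditive.comp_add, ← Functor.map_comp_assoc, ← Functor.map_comp_assoc,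
    inr_f_fst_v, inr_f_snd_v]
  simp

lemma inl_sh (m j : ℤ) (h : j + 1 = m) :
    F.map ((inl (pmap adj b hb)).v (m+1) m (by omega)) ≫ sh adj b hb m j h =
      τg adj b hb m ≫ F.map ((inl (pmap adj b hb)).v m j (by omega)) := by
  rw [sh, Preadditive.comp_add, ← Functor.map_comp_assoc, ← Functor.map_comp_assoc,
    inl_v_fst_v, inl_v_snd_v]
  simp
  rfl

lemma combine {W Z : B} (u v w : W ⟶ W) (l : W ⟶ Z) (h : w + v = u - 𝟙 W) :
    l = (u ≫ l - v ≫ l) + -(w ≫ l) := by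
  have h' : v + w = u - 𝟙 W := by rw [← h]; abel
  have : u - (v + w) = 𝟙 W := by rw [h']; abel
  calc l = (u - (v + w)) ≫ l := by rw [this, Category.id_comp]
    _ = (u ≫ l - v ≫ l) + -(w ≫ l) := by
        simp only [Preadditive.sub_comp, Preadditive.add_comp]
        abel

lemma scomm (i : ℤ) :
    𝟙 (F.obj ((mappingCone (pmap adj b hb)).X i)) =
      F.map ((mappingCone (pmap adj b hb)).d i (i+1)) ≫ sh adj b hb (i+1) i rfl +
      sh adj b hb i (i-1) (by omega) ≫ F.map ((mappingCone (pmap adj b hb)).d (i-1) i) := by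
  apply Fcone_ext adj b hb (rfl : i + 1 = i + 1)
  · -- inl component
    rw [Preadditive.comp_add, Category.comp_id]
    have e1 := inl_v_d (pmap adj b hb) (i+1) i (i+1+1) (by omega) (by omega)
    have A1 : F.map ((inl (pmap adj b hb)).v (i+1) i (by omega)) ≫
        F.map ((mappingCone (pmap adj b hb)).d i (i+1)) ≫ sh adj b hb (i+1) i rfl =
        (F.map (pf adj b hb (i+1)) ≫ σg adj b hb (i+1)) ≫
          F.map ((inl (pmap adj b hb)).v (i+1) i (by omega))
        - (F.map (dP adj b hb (i+1)) ≫ τg adj b hb (i+1)) ≫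
          F.map ((inl (pmap adj b hb)).v (i+1) i (by omega)) := by
      rw [← Functor.map_comp_assoc, e1, Functor.map_sub, Preadditive.sub_comp,
        Functor.map_comp, Functor.map_comp, Category.assoc, Category.assoc,
        inr_sh adj b hb (i+1) i rfl, inl_sh adj b hb (i+1) i rfl, Pc_d, pmap_f]
      simp only [Category.assoc]
      rfl
    have A2 : F.map ((inl (pmap adj b hb)).v (i+1) i (by omega)) ≫
        sh adj b hb i (i-1) (by omega) ≫ F.map ((mappingCone (pmap adj b hb)).d (i-1) i) =
        -((τg adj b hb i ≫ F.map (dP adj b hb i)) ≫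
          F.map ((inl (pmap adj b hb)).v (i+1) i (by omega))) := by
      rw [← Category.assoc, inl_sh adj b hb i (i-1) (by omega)]
      erw [Category.assoc (τg adj b hb i), ← Functor.map_comp]
      erw [inl_v_d (pmap adj b hb) i (i-1) (i+1) (by omega) (by omega),
        Functor.map_sub, Preadditive.comp_sub, Functor.map_comp, Functor.map_comp, pmap_f,
        Pc_d, reassoc_of% (G5 adj b hb i)]
      simp only [Limits.zero_comp, zero_sub, Category.assoc]
      rfl
    rw [A1, A2]
    exact combine _ _ _ _ (G6 adj b hb i)
  · -- inr component
    rw [Preadditive.comp_add, Category.comp_id]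
    have B1 : F.map ((inr (pmap adj b hb)).f i) ≫
        F.map ((mappingCone (pmap adj b hb)).d i (i+1)) ≫ sh adj b hb (i+1) i rfl =
        (F.map (X.d i (i+1)) ≫ σg adj b hb (i+1)) ≫
          F.map ((inl (pmap adj b hb)).v (i+1) i (by omega)) := by
      rw [← Functor.map_comp_assoc, inr_f_d (pmap adj b hb) i (i+1), Functor.map_comp,
        Category.assoc, inr_sh adj b hb (i+1) i rfl]
      simp only [Category.assoc]
    have B2 : F.map ((inr (pmap adj b hb)).f i) ≫
        sh adj b hb i (i-1) (by omega) ≫ F.map ((mappingCone (pmap adj b hb)).d (i-1) i) =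
        F.map ((inr (pmap adj b hb)).f i)
        - (F.map (X.d i (i+1)) ≫ σg adj b hb (i+1)) ≫
          F.map ((inl (pmap adj b hb)).v (i+1) i (by omega)) := by
      rw [← Category.assoc, inr_sh adj b hb i (i-1) (by omega), Category.assoc]
      erw [← Functor.map_comp]
      erw [inl_v_d (pmap adj b hb) i (i-1) (i+1) (by omega) (by omega),
        Functor.map_sub, Preadditive.comp_sub, Functor.map_comp, Functor.map_comp, pmap_f,
        Pc_d, ← Category.assoc _ (F.map (pf adj b hb i)), G3 adj b hb i, Category.id_comp,
        ← Category.assoc _ (F.map (dP adj b hb i)), G4 adj b hb i]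
      rfl
    rw [B1, B2]
    abel


/-- The contracting homotopy of `F` applied to the mapping cone. -/
noncomputable def contraction :
    Homotopy (𝟙 ((F.mapHomologicalComplex (ComplexShape.up ℤ)).obj
      (mappingCone (pmap adj b hb)))) 0 where
  hom i j := if h : j + 1 = i then sh adj b hb i j h else 0
  zero i j h := dif_neg (by simpa using h)
  comm i := by
    have hrel : (ComplexShape.up ℤ).Rel i (i+1) := by simp
    have hrel' : (ComplexShape.up ℤ).Rel (i-1) i := by simp
    rw [dNext_eq _ hrel, prevD_eq _ hrel']
    erw [dif_pos rfl, dif_pos (show (i-1) + 1 = i by omega)]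
    simp only [HomologicalComplex.id_f, HomologicalComplex.zero_f_apply, add_zero,
      Functor.mapHomologicalComplex_obj_d]
    exact scomm adj b hb i

end Htpy

end Stmt17

/-- Every bounded above cochain complex `X` over `A` admits an `F`-projective
resolution: a bounded above complex `P` of `F`-projective objects together with a chain
map `p : P ⟶ X` whose mapping cone is `F`-split acyclic (contractible after applying
`F`), i.e. zero in `D_F(A)`. -/
theorem stmt_17 (F : A ⥤ B) [F.Additive] [F.Faithful]
    [PreservesFiniteLimits F] [PreservesFiniteColimits F]
    (L R : B ⥤ A) (adj₁ : L ⊣ F) (adj₂ : F ⊣ R)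
    (hepi : ∀ X : A, Epi (adj₁.counit.app X))
    (X : CochainComplex A ℤ)
    (hX : ∃ b : ℤ, ∀ i : ℤ, b < i → IsZero (X.X i)) :
    ∃ (P : CochainComplex A ℤ) (_ : ∃ b : ℤ, ∀ i : ℤ, b < i → IsZero (P.X i))
      (_ : ∀ i : ℤ, FProjective L (P.X i)) (p : P ⟶ X),
      Nonempty (Homotopy
        (𝟙 ((F.mapHomologicalComplex (ComplexShape.up ℤ)).obj (CochainComplex.mappingCone p))) 0) := by
  obtain ⟨b, hb⟩ := hX
  exact ⟨Stmt17.Pc adj₁ b hb, ⟨b, fun i hi => Stmt17.PX_top adj₁ b hb i hi⟩,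
    fun i => Stmt17.PX_proj adj₁ b hb i, Stmt17.pmap adj₁ b hb,
    ⟨Stmt17.contraction adj₁ b hb⟩⟩
end
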